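/- For every k ≥ 5 and n ≥ k(k+1)·2^k, there exists a tournament on n vertices that does not contain the k-th power of a directed path of length k(k+1)·n/2^k. -/

import Mathlib

/-- A tournament: irreflexive, and exactly one direction between distinct vertices. -/
def IsTournament {V : Type*} (T : V → V → Prop) : Prop :=
  (∀ v : V, ¬ T v v) ∧ ∀ u v : V, u ≠ v → (T u v ↔ ¬ T v u)

/-- `T` contains the k-th power of a directed path on `L` vertices. -/
def ContainsPathPower {V : Type*} (T : V → V → Prop) (k L : ℕ) : Prop :=
  ∃ v : Fin L → V, Function.Injective v ∧
    ∀ i j : Fin L, (i : ℕ) < (j : ℕ) → (j : ℕ) ≤ (i : ℕ) + k → T (v i) (v j)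

namespace UpperBound

open Finset

attribute [local instance] Classical.propDecidable

/-- Tournament on `Fin b` determined by a boolean function on ordered pairs. -/
def TournOf {b : ℕ} (f : Fin b → Fin b → Bool) (u v : Fin b) : Prop :=
  (u < v ∧ f u v = true) ∨ (v < u ∧ f v u = false)

lemma tournOf_irrefl {b : ℕ} (f : Fin b → Fin b → Bool) (u : Fin b) : ¬ TournOf f u u := by
  rintro (⟨h, -⟩ | ⟨h, -⟩) <;> exact absurd h (lt_irrefl u)

lemma tournOf_asymm {b : ℕ} (f : Fin b → Fin b → Bool) {u v : Fin b} :
    TournOf f u v → TournOf f v u → False := by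
  rintro (⟨h1, e1⟩ | ⟨h1, e1⟩) (⟨h2, e2⟩ | ⟨h2, e2⟩)
  · exact absurd h2 (asymm h1)
  · rw [e1] at e2; cases e2
  · rw [e2] at e1; cases e1
  · exact absurd h2 (asymm h1)

lemma tournOf_total {b : ℕ} (f : Fin b → Fin b → Bool) {u v : Fin b} (h : u ≠ v) :
    TournOf f u v ∨ TournOf f v u := by
  rcases lt_or_gt_of_ne h with hl | hg
  · cases hfe : f u v
    · exact Or.inr (Or.inr ⟨hl, hfe⟩)
    · exact Or.inl (Or.inl ⟨hl, hfe⟩)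
  · cases hfe : f v u
    · exact Or.inl (Or.inr ⟨hg, hfe⟩)
    · exact Or.inr (Or.inl ⟨hg, hfe⟩)

/-- The set of index pairs constrained by a `k`-th power of a path on `m` vertices. -/
def winPairs (m k : ℕ) : Finset (Fin m × Fin m) :=
  univ.filter fun p => (p.1 : ℕ) < p.2 ∧ (p.2 : ℕ) ≤ p.1 + k

lemma kk_le_pow {k : ℕ} (hk : 5 ≤ k) : k * (k + 1) ≤ 2 ^ k := by
  induction k, hk using Nat.le_induction with
  | base => norm_num
  | succ n hn ih =>
    calc (n + 1) * (n + 1 + 1) ≤ n * (n + 1) * 2 := by nlinarith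
    _ ≤ 2 ^ n * 2 := Nat.mul_le_mul_right 2 ih
    _ = 2 ^ (n + 1) := (pow_succ 2 n).symm

lemma winPairs_card {m k : ℕ} (hk : 1 ≤ k) (hkm : k ≤ m) (hm2 : m * 2 = k * (k + 1)) :
    (k - 1) * m ≤ (winPairs m k).card := by
  classical
  have hfib : ∀ j : Fin m, ((winPairs m k).filter fun p => p.2 = j).card
      = (j : ℕ) - ((j : ℕ) - k) := by
    intro j
    have himg : ((winPairs m k).filter fun p => p.2 = j)
        = (univ.filter fun i : Fin m => (i : ℕ) < j ∧ (j : ℕ) ≤ (i : ℕ) + k).image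
            (fun i => (i, j)) := by
      ext ⟨p1, p2⟩
      simp only [winPairs, mem_filter, mem_univ, true_and, mem_image, Prod.mk.injEq]
      constructor
      · rintro ⟨⟨h1, h2⟩, h3⟩
        subst h3
        exact ⟨p1, ⟨h1, h2⟩, rfl, rfl⟩
      · rintro ⟨i, ⟨h1, h2⟩, rfl, rfl⟩
        exact ⟨⟨h1, h2⟩, rfl⟩
    rw [himg, Finset.card_image_of_injOn (fun a _ b _ h => by
      simpa using (Prod.mk.injEq .. ▸ h).1)]
    have h2 : (univ.filter fun i : Fin m => (i : ℕ) < j ∧ (j : ℕ) ≤ (i : ℕ) + k).card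
        = ((range m).filter fun x => x < (j : ℕ) ∧ (j : ℕ) ≤ x + k).card := by
      rw [Finset.card_filter, Finset.card_filter,
        Fin.sum_univ_eq_sum_range (fun x => if x < (j : ℕ) ∧ (j : ℕ) ≤ x + k then 1 else 0) m]
    rw [h2]
    have h3 : ((range m).filter fun x => x < (j : ℕ) ∧ (j : ℕ) ≤ x + k)
        = Ico ((j : ℕ) - k) (j : ℕ) := by
      ext x
      simp only [mem_filter, mem_range, mem_Ico]
      have := j.isLt
      omega
    rw [h3, Nat.card_Ico]
  have hcard : (winPairs m k).card = ∑ j : Fin m, ((j : ℕ) - ((j : ℕ) - k)) := by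
    rw [Finset.card_eq_sum_card_fiberwise (f := Prod.snd) (t := univ) (fun x _ => mem_univ _)]
    exact Finset.sum_congr rfl fun j _ => hfib j
  rw [hcard, Fin.sum_univ_eq_sum_range (fun x => x - (x - k)) m]
  have hsplit : ∑ x ∈ range m, (x - (x - k)) = (∑ x ∈ range k, x) + (m - k) * k := by
    rw [range_eq_Ico, ← Finset.sum_Ico_consecutive _ (Nat.zero_le k) hkm]
    congr 1
    · rw [← range_eq_Ico]
      exact Finset.sum_congr rfl fun x hx => by
        simp only [mem_range] at hx; omega
    · rw [Finset.sum_congr rfl (fun x hx => by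
        simp only [mem_Ico] at hx
        omega : ∀ x ∈ Ico k m, x - (x - k) = k)]
      rw [Finset.sum_const, Nat.card_Ico, smul_eq_mul]
  rw [hsplit]
  have hg := Finset.sum_range_id_mul_two k
  set A := ∑ x ∈ range k, x with hA
  zify [hkm, hk]
  zify [show 1 ≤ k from hk] at hg
  have hm2' : (m : ℤ) * 2 = k * (k + 1) := by exact_mod_cast hm2
  nlinarith [hg, hm2']

lemma desc_lt_pow {b m : ℕ} (hb : 1 ≤ b) (hm : 2 ≤ m) : b.descFactorial m < b ^ m := by
  obtain ⟨r, rfl⟩ : ∃ r, m = r + 2 := ⟨m - 2, by omega⟩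
  rw [Nat.descFactorial_succ]
  calc (b - (r + 1)) * b.descFactorial (r + 1)
      ≤ (b - 1) * b ^ (r + 1) :=
        Nat.mul_le_mul (by omega) (Nat.descFactorial_le_pow b (r + 1))
    _ < b * b ^ (r + 1) :=
        Nat.mul_lt_mul_of_lt_of_le (by omega) le_rfl (pow_pos (by omega) (r + 1))
    _ = b ^ (r + 2) := by ring

/-- Counting: for a fixed injective sequence `w`, the number of `f` for which `w`
is a power path is at most `2 ^ (b*b - |winPairs|)`. -/
lemma card_bad_le {b m : ℕ} (k : ℕ) (w : Fin m ↪ Fin b) :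
    (univ.filter fun f : Fin b → Fin b → Bool =>
        ∀ i j : Fin m, (i : ℕ) < j → (j : ℕ) ≤ (i : ℕ) + k → TournOf f (w i) (w j)).card
      ≤ 2 ^ (b * b - (winPairs m k).card) := by
  classical
  set S := winPairs m k with hS
  set pr : Fin m × Fin m → Fin b × Fin b :=
    fun p => if w p.1 < w p.2 then (w p.1, w p.2) else (w p.2, w p.1) with hpr
  set D : Finset (Fin b × Fin b) := S.image pr with hD
  have hprS : ∀ p ∈ S, (p.1 : ℕ) < p.2 := by
    intro p hp
    simp only [hS, winPairs, mem_filter] at hp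
    exact hp.2.1
  have hDcard : D.card = S.card := by
    apply Finset.card_image_of_injOn
    intro p hp q hq he
    have hp1 : (p.1 : ℕ) < p.2 := hprS p hp
    have hq1 : (q.1 : ℕ) < q.2 := hprS q hq
    have hwp : w p.1 ≠ w p.2 := fun h => by
      have := w.injective h; omega
    have hwq : w q.1 ≠ w q.2 := fun h => by
      have := w.injective h; omega
    by_cases h1 : w p.1 < w p.2 <;> by_cases h2 : w q.1 < w q.2 <;>
      simp only [hpr, h1, h2, if_true, if_false, if_pos, if_neg, Prod.mk.injEq] at he
    · obtain ⟨e1, e2⟩ := he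
      have := w.injective e1; have := w.injective e2
      exact Prod.ext (by omega) (by omega)
    · obtain ⟨e1, e2⟩ := he
      have h1' := w.injective e1; have h2' := w.injective e2
      -- p.1 = q.2, p.2 = q.1, contradiction with orders
      exfalso; omega
    · obtain ⟨e1, e2⟩ := he
      have h1' := w.injective e1; have h2' := w.injective e2
      exfalso; omega
    · obtain ⟨e1, e2⟩ := he
      have := w.injective e1; have := w.injective e2
      exact Prod.ext (by omega) (by omega)
  set badW := univ.filter fun f : Fin b → Fin b → Bool =>
      ∀ i j : Fin m, (i : ℕ) < j → (j : ℕ) ≤ (i : ℕ) + k → TournOf f (w i) (w j) with hbadW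
  have hinj : ∀ f1 ∈ badW, ∀ f2 ∈ badW,
      (fun x : {x : Fin b × Fin b // x ∉ D} => f1 x.1.1 x.1.2)
        = (fun x : {x : Fin b × Fin b // x ∉ D} => f2 x.1.1 x.1.2) → f1 = f2 := by
    intro f1 hf1 f2 hf2 he
    simp only [hbadW, mem_filter, mem_univ, true_and] at hf1 hf2
    funext u v
    by_cases hx : (u, v) ∈ D
    · simp only [hD, mem_image] at hx
      obtain ⟨p, hpS, hpe⟩ := hx
      have hps : (p.1 : ℕ) < p.2 ∧ (p.2 : ℕ) ≤ (p.1 : ℕ) + k := by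
        simp only [hS, winPairs, mem_filter] at hpS
        exact hpS.2
      have ht1 := hf1 p.1 p.2 hps.1 hps.2
      have ht2 := hf2 p.1 p.2 hps.1 hps.2
      by_cases hlt : w p.1 < w p.2
      · simp only [hpr, if_pos hlt, Prod.mk.injEq] at hpe
        obtain ⟨rfl, rfl⟩ := hpe
        rcases ht1 with ⟨-, e1⟩ | ⟨hgt, -⟩
        · rcases ht2 with ⟨-, e2⟩ | ⟨hgt, -⟩
          · rw [e1, e2]
          · exact absurd hgt (asymm hlt)
        · exact absurd hgt (asymm hlt)
      · simp only [hpr, if_neg hlt, Prod.mk.injEq] at hpe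
        obtain ⟨rfl, rfl⟩ := hpe
        rcases ht1 with ⟨hlt', -⟩ | ⟨-, e1⟩
        · exact absurd hlt' hlt
        · rcases ht2 with ⟨hlt', -⟩ | ⟨-, e2⟩
          · exact absurd hlt' hlt
          · rw [e1, e2]
    · exact congrFun he ⟨(u, v), hx⟩
  calc badW.card ≤ (univ : Finset ({x : Fin b × Fin b // x ∉ D} → Bool)).card := by
        apply Finset.card_le_card_of_injOn
          (fun f => fun x : {x : Fin b × Fin b // x ∉ D} => f x.1.1 x.1.2)
          (fun _ _ => mem_univ _)
        intro f1 hf1 f2 hf2 he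
        exact hinj f1 (Finset.mem_coe.mp hf1) f2 (Finset.mem_coe.mp hf2) he
    _ = 2 ^ (b * b - S.card) := by
        rw [Finset.card_univ, Fintype.card_fun, Fintype.card_subtype_compl,
          Fintype.card_coe, hDcard]
        simp
  
/-- There exists a tournament on `2^(k-1)` vertices with no k-th power of a path on
`k(k+1)/2` vertices. -/
lemma exists_good (k : ℕ) (hk : 5 ≤ k) :
    ∃ f : Fin (2 ^ (k - 1)) → Fin (2 ^ (k - 1)) → Bool,
      ∀ w : Fin (k * (k + 1) / 2) → Fin (2 ^ (k - 1)), Function.Injective w →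
        ¬ ∀ i j : Fin (k * (k + 1) / 2), (i : ℕ) < j → (j : ℕ) ≤ (i : ℕ) + k →
            TournOf f (w i) (w j) := by
  classical
  set b := 2 ^ (k - 1) with hbdef
  set m := k * (k + 1) / 2 with hmdef
  have hm2 : m * 2 = k * (k + 1) :=
    Nat.div_mul_cancel ((Nat.even_mul_succ_self k).two_dvd)
  have hkk : k * (k + 1) ≤ 2 ^ k := kk_le_pow hk
  have h2k : 2 ^ k = b * 2 := by
    rw [hbdef, ← pow_succ]
    congr 1
    omega
  have hk2 : k * 2 ≤ k * (k + 1) := Nat.mul_le_mul_left k (by omega)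
  have hkm : k ≤ m := by omega
  have hmb : m ≤ b := by omega
  have hm30 : 5 * 6 ≤ k * (k + 1) := Nat.mul_le_mul hk (by omega)
  have hm15 : 15 ≤ m := by omega
  have hb1 : 1 ≤ b := Nat.one_le_two_pow
  have hE : (k - 1) * m ≤ (winPairs m k).card := winPairs_card (by omega) hkm hm2
  have hEbb : (k - 1) * m ≤ b * b :=
    le_trans (Nat.mul_le_mul (by omega) le_rfl) (Nat.mul_le_mul hmb hmb)
  have hdesc : b.descFactorial m < 2 ^ ((k - 1) * m) := by
    have : (2 : ℕ) ^ ((k - 1) * m) = b ^ m := by rw [pow_mul]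
    rw [this]
    exact desc_lt_pow hb1 (by omega)
  set badAll := univ.filter fun f : Fin b → Fin b → Bool =>
    ∃ w : Fin m ↪ Fin b, ∀ i j : Fin m, (i : ℕ) < j → (j : ℕ) ≤ (i : ℕ) + k →
      TournOf f (w i) (w j) with hbadAll
  have hsub : badAll ⊆ (univ : Finset (Fin m ↪ Fin b)).biUnion
      (fun w => univ.filter fun f => ∀ i j : Fin m, (i : ℕ) < j → (j : ℕ) ≤ (i : ℕ) + k →
        TournOf f (w i) (w j)) := by
    intro f hf
    simp only [hbadAll, mem_filter, mem_univ, true_and] at hf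
    obtain ⟨w, hw⟩ := hf
    exact mem_biUnion.mpr ⟨w, mem_univ _, mem_filter.mpr ⟨mem_univ _, hw⟩⟩
  have hcount : badAll.card < 2 ^ (b * b) := by
    calc badAll.card ≤ ∑ w : Fin m ↪ Fin b,
          (univ.filter fun f : Fin b → Fin b → Bool =>
            ∀ i j : Fin m, (i : ℕ) < j → (j : ℕ) ≤ (i : ℕ) + k →
              TournOf f (w i) (w j)).card :=
        le_trans (Finset.card_le_card hsub) (Finset.card_biUnion_le)
      _ ≤ (univ : Finset (Fin m ↪ Fin b)).card • 2 ^ (b * b - (k - 1) * m) := by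
        apply Finset.sum_le_card_nsmul
        intro w _
        refine le_trans (card_bad_le k w) (Nat.pow_le_pow_right (by norm_num) ?_)
        exact Nat.sub_le_sub_left hE (b * b)
      _ = b.descFactorial m * 2 ^ (b * b - (k - 1) * m) := by
        rw [smul_eq_mul, Finset.card_univ, Fintype.card_embedding_eq]
        simp
      _ < 2 ^ ((k - 1) * m) * 2 ^ (b * b - (k - 1) * m) :=
        Nat.mul_lt_mul_of_lt_of_le hdesc le_rfl (pow_pos (by norm_num) _)
      _ = 2 ^ (b * b) := by
        rw [← pow_add]
        congr 1
        omega
  have hex : ∃ f : Fin b → Fin b → Bool, f ∉ badAll := by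
    by_contra hcon
    push_neg at hcon
    have : badAll = univ := Finset.eq_univ_iff_forall.mpr hcon
    rw [this, Finset.card_univ, Fintype.card_fun] at hcount
    simp only [Fintype.card_fun, Fintype.card_fin, Fintype.card_bool] at hcount
    rw [← pow_mul] at hcount
    omega
  obtain ⟨f, hf⟩ := hex
  refine ⟨f, fun w hw hpp => ?_⟩
  apply hf
  simp only [hbadAll, mem_filter, mem_univ, true_and]
  exact ⟨⟨w, hw⟩, hpp⟩

lemma main (k n : ℕ) (hk : 5 ≤ k) (hn : k * (k + 1) * 2 ^ k ≤ n) :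
    ∃ T : Fin n → Fin n → Prop, IsTournament T ∧
      ∀ ℓ : ℕ, ((k * (k + 1) * n : ℕ) : ℝ) / 2 ^ k ≤ (ℓ : ℝ) →
        ¬ ContainsPathPower T k (ℓ + 1) := by
  classical
  set b := 2 ^ (k - 1) with hbdef
  set m := k * (k + 1) / 2 with hmdef
  obtain ⟨f, hf⟩ := UpperBound.exists_good k hk
  have hbpos : 0 < b := pow_pos (by norm_num) _
  have hm2 : m * 2 = k * (k + 1) :=
    Nat.div_mul_cancel ((Nat.even_mul_succ_self k).two_dvd)
  have h2k : 2 ^ k = b * 2 := by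
    rw [hbdef, ← pow_succ]
    congr 1
    omega
  have hm30 : 5 * 6 ≤ k * (k + 1) := Nat.mul_le_mul hk (by omega)
  have hm15 : 15 ≤ m := by omega
  have hb16 : 16 ≤ b := by
    calc (16 : ℕ) = 2 ^ 4 := by norm_num
    _ ≤ 2 ^ (k - 1) := Nat.pow_le_pow_right (by norm_num) (by omega)
  have hn4mb : 4 * (m * b) ≤ n := by
    have : k * (k + 1) * 2 ^ k = 4 * (m * b) := by
      rw [← hm2, h2k]; ring
    omega
  have hnpos : 0 < n := by
    have : 0 < k * (k + 1) * 2 ^ k := by positivity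
    omega
  set r : Fin n → Fin b := fun u => ⟨(u : ℕ) % b, Nat.mod_lt _ hbpos⟩ with hrdef
  set q : Fin n → ℕ := fun u => (u : ℕ) / b with hqdef
  have hqr : ∀ u v : Fin n, q u = q v → r u = r v → u = v := by
    intro u v h1 h2
    have h1' : (u : ℕ) / b = (v : ℕ) / b := h1
    have h2' : (u : ℕ) % b = (v : ℕ) % b := congrArg Fin.val h2
    apply Fin.ext
    rw [← Nat.div_add_mod (u : ℕ) b, ← Nat.div_add_mod (v : ℕ) b, h1', h2']
  refine ⟨fun u v => q v < q u ∨ (q u = q v ∧ UpperBound.TournOf f (r u) (r v)), ⟨?_, ?_⟩, ?_⟩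
  · rintro u (h | ⟨-, h⟩)
    · exact lt_irrefl _ h
    · exact UpperBound.tournOf_irrefl f (r u) h
  · intro u v huv
    constructor
    · rintro (h1 | ⟨he, ht⟩) (h2 | ⟨he2, ht2⟩)
      · omega
      · omega
      · omega
      · exact UpperBound.tournOf_asymm f ht ht2
    · intro hns
      rcases Nat.lt_trichotomy (q u) (q v) with hlt | heq | hgt
      · exact absurd (Or.inl hlt) hns
      · have hrne : r u ≠ r v := fun h => huv (hqr u v heq h)
        rcases UpperBound.tournOf_total f hrne with h | h
        · exact Or.inr ⟨heq, h⟩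
        · exact absurd (Or.inr ⟨heq.symm, h⟩) hns
      · exact Or.inl hgt
  · intro ℓ hℓ hC
    obtain ⟨v, hvinj, hvp⟩ := hC
    -- translate the real inequality into a natural-number one
    have hln : m * n ≤ ℓ * b := by
      rw [div_le_iff₀ (by positivity : (0 : ℝ) < (2 : ℝ) ^ k)] at hℓ
      have e1 : k * (k + 1) * n = 2 * (m * n) := by rw [← hm2]; ring
      have e2 : ((2 : ℝ) ^ k) = ((b * 2 : ℕ) : ℝ) := by
        rw [← h2k]; push_cast; ring
      rw [e1, e2] at hℓ
      have : ((2 * (m * n) : ℕ) : ℝ) ≤ ((ℓ * (b * 2) : ℕ) : ℝ) := by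
        push_cast at hℓ ⊢
        linarith
      have hnat : 2 * (m * n) ≤ ℓ * (b * 2) := by exact_mod_cast this
      have h2' : 2 * (m * n) ≤ 2 * (ℓ * b) := by
        calc 2 * (m * n) ≤ ℓ * (b * 2) := hnat
          _ = 2 * (ℓ * b) := by ring
      exact Nat.le_of_mul_le_mul_left h2' (by norm_num)
    -- block index is non-increasing along the path
    have hstep : ∀ a : ℕ, (ha : a + 1 ≤ ℓ) →
        q (v ⟨a + 1, by omega⟩) ≤ q (v ⟨a, by omega⟩) := by
      intro a ha
      have := hvp ⟨a, by omega⟩ ⟨a + 1, by omega⟩ (by simp) (by simp; omega)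
      rcases this with h | ⟨he, -⟩
      · exact le_of_lt h
      · exact le_of_eq he.symm
    have hmono' : ∀ d a : ℕ, (ha : a + d ≤ ℓ) →
        q (v ⟨a + d, by omega⟩) ≤ q (v ⟨a, by omega⟩) := by
      intro d
      induction d with
      | zero => intro a ha; exact le_rfl
      | succ d ih =>
        intro a ha
        have h1 : q (v ⟨a + (d + 1), by omega⟩) ≤ q (v ⟨a + d, by omega⟩) := by
          have := hstep (a + d) (by omega)
          convert this using 3 <;> simp only [Fin.mk.injEq] <;> omega
        exact le_trans h1 (ih a (by omega))
    have hmono : ∀ i j : Fin (ℓ + 1), (i : ℕ) ≤ j → q (v j) ≤ q (v i) := by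
      intro i j hij
      have hjl := j.isLt
      have hil := i.isLt
      have h := hmono' ((j : ℕ) - (i : ℕ)) (i : ℕ) (by omega)
      have e1 : (⟨(i : ℕ) + ((j : ℕ) - (i : ℕ)), by omega⟩ : Fin (ℓ + 1)) = j :=
        Fin.ext (by simp; omega)
      have e2 : (⟨(i : ℕ), by omega⟩ : Fin (ℓ + 1)) = i := Fin.ext rfl
      rw [e1, e2] at h
      exact h
    -- each fiber of q∘v has at most m-1 elements
    have hfib : ∀ c : ℕ, (univ.filter fun i : Fin (ℓ + 1) => q (v i) = c).card ≤ m - 1 := by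
      intro c
      by_contra hcon
      push_neg at hcon
      set s := univ.filter fun i : Fin (ℓ + 1) => q (v i) = c with hsdef
      have hscard : m ≤ s.card := by omega
      have hne : s.Nonempty := Finset.card_pos.mp (by omega)
      set i0 := s.min' hne with hi0
      set i1 := s.max' hne with hi1
      have hi0c : q (v i0) = c := (mem_filter.mp (s.min'_mem hne)).2
      have hi1c : q (v i1) = c := (mem_filter.mp (s.max'_mem hne)).2
      have hsubset : s ⊆ Finset.Icc i0 i1 :=
        fun x hx => mem_Icc.mpr ⟨s.min'_le x hx, s.le_max' x hx⟩
      have hIcc := Finset.card_le_card hsubset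
      rw [Fin.card_Icc] at hIcc
      have h01 : (i0 : ℕ) + (m - 1) ≤ (i1 : ℕ) := by omega
      have hi1l : (i1 : ℕ) ≤ ℓ := by omega
      have hmem : ∀ t : ℕ, (ht : t ≤ m - 1) → q (v ⟨(i0 : ℕ) + t, by omega⟩) = c := by
        intro t ht
        have hle1 : q (v ⟨(i0 : ℕ) + t, by omega⟩) ≤ q (v i0) := by
          apply hmono i0 ⟨(i0 : ℕ) + t, by omega⟩
          simp
        have hle2 : q (v i1) ≤ q (v ⟨(i0 : ℕ) + t, by omega⟩) := by
          apply hmono ⟨(i0 : ℕ) + t, by omega⟩ i1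
          simp
          omega
        omega
      set w : Fin m → Fin b := fun t => r (v ⟨(i0 : ℕ) + (t : ℕ), by
        have := t.isLt; omega⟩) with hwdef
      have hwinj : Function.Injective w := by
        intro t t' he
        simp only [hwdef] at he
        have hq1 : q (v ⟨(i0 : ℕ) + (t : ℕ), by have := t.isLt; omega⟩) = c :=
          hmem t (by have := t.isLt; omega)
        have hq2 : q (v ⟨(i0 : ℕ) + (t' : ℕ), by have := t'.isLt; omega⟩) = c :=
          hmem t' (by have := t'.isLt; omega)
        have := hqr _ _ (hq1.trans hq2.symm) he
        have := hvinj this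
        have : (i0 : ℕ) + (t : ℕ) = (i0 : ℕ) + (t' : ℕ) := congrArg Fin.val this
        exact Fin.ext (by omega)
      apply hf w hwinj
      intro t t' htt' htk
      have h1 : ((i0 : ℕ) + (t : ℕ)) < ((i0 : ℕ) + (t' : ℕ)) := by omega
      have h2 : ((i0 : ℕ) + (t' : ℕ)) ≤ ((i0 : ℕ) + (t : ℕ)) + k := by omega
      have := hvp ⟨(i0 : ℕ) + (t : ℕ), by have := t.isLt; omega⟩
        ⟨(i0 : ℕ) + (t' : ℕ), by have := t'.isLt; omega⟩ (by simpa) (by simpa)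
      rcases this with h | ⟨-, h⟩
      · exfalso
        have hq1 : q (v ⟨(i0 : ℕ) + (t : ℕ), by have := t.isLt; omega⟩) = c :=
          hmem t (by have := t.isLt; omega)
        have hq2 : q (v ⟨(i0 : ℕ) + (t' : ℕ), by have := t'.isLt; omega⟩) = c :=
          hmem t' (by have := t'.isLt; omega)
        omega
      · exact h
    -- counting
    set Q := (n - 1) / b + 1 with hQdef
    have himgsub : (univ : Finset (Fin (ℓ + 1))).image (fun i => q (v i)) ⊆ range Q := by
      intro c hc
      obtain ⟨i, -, rfl⟩ := Finset.mem_image.mp hc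
      rw [mem_range, hQdef]
      have : (v i : ℕ) ≤ n - 1 := by have := (v i).isLt; omega
      have := Nat.div_le_div_right (c := b) this
      simp only [hqdef]
      omega
    have hcount : ℓ + 1 ≤ Q * (m - 1) := by
      have h1 : (univ : Finset (Fin (ℓ + 1))).card
          = ∑ c ∈ (univ : Finset (Fin (ℓ + 1))).image (fun i => q (v i)),
              (univ.filter fun i : Fin (ℓ + 1) => q (v i) = c).card :=
        Finset.card_eq_sum_card_fiberwise (fun x _ => Finset.mem_image_of_mem _ (mem_univ x))
      have h2 : ∑ c ∈ (univ : Finset (Fin (ℓ + 1))).image (fun i => q (v i)),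
            (univ.filter fun i : Fin (ℓ + 1) => q (v i) = c).card
          ≤ ((univ : Finset (Fin (ℓ + 1))).image (fun i => q (v i))).card • (m - 1) :=
        Finset.sum_le_card_nsmul _ _ _ (fun c _ => hfib c)
      have h3 : ((univ : Finset (Fin (ℓ + 1))).image (fun i => q (v i))).card ≤ Q :=
        le_trans (Finset.card_le_card himgsub) (by rw [Finset.card_range])
      have h4 : (univ : Finset (Fin (ℓ + 1))).card = ℓ + 1 := by simp
      calc ℓ + 1 = (univ : Finset (Fin (ℓ + 1))).card := h4.symm
        _ ≤ ((univ : Finset (Fin (ℓ + 1))).image (fun i => q (v i))).card • (m - 1) := by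
            rw [← h1] at h2; exact h2
        _ = ((univ : Finset (Fin (ℓ + 1))).image (fun i => q (v i))).card * (m - 1) := by
            rw [smul_eq_mul]
        _ ≤ Q * (m - 1) := Nat.mul_le_mul_right _ h3
    -- final arithmetic contradiction
    have hQb : Q * b ≤ n - 1 + b := by
      rw [hQdef, add_mul, one_mul]
      have := Nat.div_mul_le_self (n - 1) b
      omega
    have hfinal : (ℓ + 1) * b ≤ ℓ * b := by
      calc (ℓ + 1) * b ≤ Q * (m - 1) * b := Nat.mul_le_mul_right b hcount
        _ = Q * b * (m - 1) := by ring
        _ ≤ (n - 1 + b) * (m - 1) := Nat.mul_le_mul_right _ hQb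
        _ ≤ m * n := by
            have hb1 : b * (m - 1) ≤ n := by
              calc b * (m - 1) ≤ b * m := Nat.mul_le_mul_left b (by omega)
                _ = m * b := Nat.mul_comm b m
                _ ≤ 4 * (m * b) := Nat.le_mul_of_pos_left _ (by norm_num)
                _ ≤ n := hn4mb
            calc (n - 1 + b) * (m - 1) = (n - 1) * (m - 1) + b * (m - 1) := by ring
              _ ≤ (n - 1) * (m - 1) + n := by omega
              _ ≤ n * (m - 1) + n := by
                  have := Nat.mul_le_mul_right (m - 1) (Nat.sub_le n 1)
                  omega
              _ = n * ((m - 1) + 1) := by ring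
              _ = n * m := by congr 1; omega
              _ = m * n := Nat.mul_comm n m
        _ ≤ ℓ * b := hln
    have : b = 0 := by
      have : ℓ * b + b ≤ ℓ * b := by
        calc ℓ * b + b = (ℓ + 1) * b := by ring
          _ ≤ ℓ * b := hfinal
      omega
    omega

end UpperBound

theorem upper_bound_construction {k n : ℕ} (hk : 5 ≤ k) (hn : k * (k + 1) * 2 ^ k ≤ n) :
    ∃ T : Fin n → Fin n → Prop, IsTournament T ∧
      ∀ ℓ : ℕ, ((k * (k + 1) * n : ℕ) : ℝ) / 2 ^ k ≤ (ℓ : ℝ) →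
        ¬ ContainsPathPower T k (ℓ + 1) :=
  UpperBound.main k n hk hn
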